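/- Let (B, L) be a Banach SNL space with Banach SNL dual (B*, L̃), A a norm-closed linear L-positive subspace of B with A⁰ L̃-negative. Then for all d ∈ B and d* ∈ B*, inf_{a ∈ A} q_{L̃}(d* − La) ≤ q_{L̃}(d* − Ld) + (1/2)‖d* − Ld‖². -/

import Mathlib

open NormedSpace

noncomputable def qL {B : Type*} [NormedAddCommGroup B] [NormedSpace ℝ B]
    (L : B →L[ℝ] StrongDual ℝ B) (b : B) : ℝ := (1 / 2) * L b b

lemma quad_discr {Q G δ : ℝ} (hQ : 0 ≤ Q) (hδ : 0 ≤ δ)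
    (h : ∀ t : ℝ, -δ ≤ t * G + t ^ 2 * Q) : G ^ 2 ≤ 4 * δ * Q := by
  rcases eq_or_lt_of_le hQ with hQ0 | hQ0
  · have hG : G = 0 := by
      by_contra hG
      have h1 := h (-(δ + 1) / G)
      rw [← hQ0, mul_zero, add_zero, div_mul_cancel₀ _ hG] at h1
      linarith
    rw [hG]
    nlinarith
  · have h1 := h (-(G / (2 * Q)))
    have key : -(G ^ 2) / (4 * Q) = (-(G / (2 * Q))) * G + (-(G / (2 * Q))) ^ 2 * Q := by
      field_simp
      ring
    rw [← key, neg_div] at h1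
    have h2 : G ^ 2 / (4 * Q) ≤ δ := by linarith
    rw [div_le_iff₀ (by positivity : (0:ℝ) < 4 * Q)] at h2
    linarith

lemma quad_root {s b c : ℝ} (hs : 0 ≤ s) (hb : 0 ≤ b) (hc : 0 ≤ c)
    (h : s ^ 2 ≤ 2 * b * s + c) : s ≤ 2 * b + Real.sqrt c := by
  nlinarith [Real.sq_sqrt hc, Real.sqrt_nonneg c, sq_nonneg (s - Real.sqrt c),
    mul_nonneg hb (Real.sqrt_nonneg c), mul_nonneg hb hs]

lemma sq_abs_le {G c : ℝ} (hc : 0 ≤ c) (h : G ^ 2 ≤ c ^ 2) : |G| ≤ c :=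
  abs_le.mpr (abs_le_of_sq_le_sq' h hc)

lemma dual_apply_le {B : Type*} [NormedAddCommGroup B] [NormedSpace ℝ B]
    {X : Type*} [NormedAddCommGroup X] [NormedSpace ℝ X]
    (T : B →L[ℝ] StrongDual ℝ X) (hT : ‖T‖ ≤ 1) (b : B) (x : X) : |T b x| ≤ ‖b‖ * ‖x‖ := by
  calc |T b x| ≤ ‖T b‖ * ‖x‖ := (T b).le_opNorm x
    _ ≤ (‖T‖ * ‖b‖) * ‖x‖ :=
        mul_le_mul_of_nonneg_right (T.le_opNorm b) (norm_nonneg x)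
    _ ≤ (1 * ‖b‖) * ‖x‖ := by
        have h1 : ‖T‖ * ‖b‖ ≤ 1 * ‖b‖ := mul_le_mul_of_nonneg_right hT (norm_nonneg b)
        exact mul_le_mul_of_nonneg_right h1 (norm_nonneg x)
    _ = ‖b‖ * ‖x‖ := by ring

set_option maxHeartbeats 2000000 in
theorem stmt13 {B : Type*} [NormedAddCommGroup B] [NormedSpace ℝ B] [CompleteSpace B]
    [Nontrivial B]
    (L : B →L[ℝ] StrongDual ℝ B) (hL : ‖L‖ ≤ 1)
    (hsym : ∀ b c : B, L c b = L b c)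
    (Lt : StrongDual ℝ B →L[ℝ] StrongDual ℝ (StrongDual ℝ B)) (hLt : @norm _ (@ContinuousLinearMap.hasOpNorm ℝ ℝ (StrongDual ℝ B) (StrongDual ℝ (StrongDual ℝ B)) _ _ _ _ _ _ (RingHom.id ℝ)) Lt ≤ 1)
    (hsymt : ∀ p q : StrongDual ℝ B, Lt q p = Lt p q)
    (hdual : ∀ b : B, Lt (L b) = inclusionInDoubleDual ℝ B b)
    (A : Subspace ℝ B) (hclosed : IsClosed (A : Set B))
    (hpos : ∀ a ∈ A, 0 ≤ qL L a)
    (hneg : ∀ b' : StrongDual ℝ B, (∀ a ∈ A, b' a = 0) → qL Lt b' ≤ 0) :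
    ∀ (d : B) (d' : StrongDual ℝ B),
      ⨅ a : A, qL Lt (d' - L a) ≤ qL Lt (d' - L d) + (1 / 2) * ‖d' - L d‖ ^ 2 := by
  intro d d'
  haveI : Nonempty A := ⟨0⟩
  -- |Lt p p| ≤ ‖p‖²
  have hq_abs : ∀ p : StrongDual ℝ B, |Lt p p| ≤ ‖p‖ ^ 2 := by
    intro p
    have := dual_apply_le Lt hLt p p
    nlinarith [this]
  have hLbb : ∀ b : B, (L b) b ≤ ‖b‖ ^ 2 := by
    intro b
    have := abs_le.mp (dual_apply_le L hL b b)
    nlinarith [this.2]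
  -- RHS is nonnegative
  have hRHS : 0 ≤ qL Lt (d' - L d) + (1 / 2) * ‖d' - L d‖ ^ 2 := by
    have h1 := hq_abs (d' - L d)
    have h2 := abs_le.mp h1
    simp only [qL]
    nlinarith [h2.1]
  have hle0 : (⨅ a : A, qL Lt (d' - L a)) ≤ 0 := by
    -- evaluation of Lt (L b)
    have hLtL : ∀ (b : B) (p : StrongDual ℝ B), Lt (L b) p = p b := by
      intro b p
      rw [hdual b]
      rfl
    -- expansion of qL Lt (d' - L b)
    have expand : ∀ b : B, qL Lt (d' - L b) = qL Lt d' - d' b + (1 / 2) * (L b) b := by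
      intro b
      have h1 : Lt (d' - L b) (d' - L b)
          = Lt d' d' - Lt d' (L b) - Lt (L b) d' + Lt (L b) (L b) := by
        rw [map_sub]
        simp only [ContinuousLinearMap.sub_apply, map_sub]
        ring
      simp only [qL]
      rw [h1, ← hsymt d' (L b), hLtL b d', hLtL b (L b)]
      ring
    by_cases hbdd : BddBelow (Set.range fun a : A => qL Lt (d' - L a))
    swap
    · rw [Real.iInf_of_not_bddBelow hbdd]
    set μ := ⨅ a : A, qL Lt (d' - L a) with hμ
    have hμle : ∀ a : A, μ ≤ qL Lt (d' - L a) := fun a => ciInf_le hbdd a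
    set C0 := qL Lt d' with hC0
    set m := μ - C0 with hm_def
    have hm : m ≤ 0 := by
      have h0 := hμle 0
      have : qL Lt (d' - L ((0 : A) : B)) = C0 := by
        simp [expand, hC0]
      rw [this] at h0
      simp only [hm_def]
      linarith
    set s₀ := 2 * Real.sqrt 2 + Real.sqrt (-2 * m) with hs₀_def
    have hs₀_nonneg : 0 ≤ s₀ := by
      rw [hs₀_def]
      positivity
    set M := Real.sqrt 2 * ‖d'‖ + Real.sqrt 2 * s₀ + 3 with hM_def
    have hM : 0 < M := by
      rw [hM_def]
      have := Real.sqrt_nonneg (2:ℝ)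
      nlinarith [norm_nonneg d', mul_nonneg this (norm_nonneg d'), mul_nonneg this hs₀_nonneg]
    refine le_of_forall_pos_le_add fun η hη => ?_
    rw [zero_add]
    set δ := min 1 ((η / M) ^ 2) with hδ_def
    have hδpos : 0 < δ := lt_min one_pos (pow_pos (div_pos hη hM) 2)
    have hδ1 : δ ≤ 1 := min_le_left _ _
    have hsqδ : Real.sqrt δ ≤ η / M := by
      have h1 : δ ≤ (η / M) ^ 2 := min_le_right _ _
      calc Real.sqrt δ ≤ Real.sqrt ((η / M) ^ 2) := Real.sqrt_le_sqrt h1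
        _ = η / M := Real.sqrt_sq (le_of_lt (div_pos hη hM))
    have hδ_le_sqδ : δ ≤ Real.sqrt δ := by
      conv_lhs => rw [← Real.sqrt_sq hδpos.le]
      apply Real.sqrt_le_sqrt
      nlinarith
    obtain ⟨a, haF⟩ : ∃ a : A, qL Lt (d' - L a) < μ + δ :=
      exists_lt_of_ciInf_lt (by linarith [lt_add_of_pos_right μ hδpos])
    -- gradient bound
    have hgrad : ∀ x : B, x ∈ A → ((L (a : B)) x - d' x) ^ 2 ≤ 2 * δ * ((L x) x) := by
      intro x hx
      have hQ : 0 ≤ (1 / 2) * (L x) x := hpos x hx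
      have ht : ∀ t : ℝ, -δ ≤ t * ((L (a : B)) x - d' x) + t ^ 2 * ((1 / 2) * (L x) x) := by
        intro t
        have hmem : (a : B) + t • x ∈ A := A.add_mem a.2 (A.smul_mem t hx)
        have hFy : μ ≤ qL Lt (d' - L ((a : B) + t • x)) := hμle ⟨_, hmem⟩
        have lin2 : (L ((a : B) + t • x)) ((a : B) + t • x)
            = (L (a : B)) (a : B) + 2 * t * ((L (a : B)) x) + t ^ 2 * ((L x) x) := by
          simp only [map_add, map_smul, ContinuousLinearMap.add_apply,
            ContinuousLinearMap.coe_smul', Pi.smul_apply, smul_eq_mul]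
          rw [hsym (a : B) x]
          ring
        have key : qL Lt (d' - L ((a : B) + t • x)) - qL Lt (d' - L (a : B))
            = t * ((L (a : B)) x - d' x) + t ^ 2 * ((1 / 2) * (L x) x) := by
          rw [expand, expand, lin2, map_add, map_smul, smul_eq_mul]
          ring
        linarith
      have := quad_discr (by linarith) hδpos.le ht
      linarith
    -- norm form of gradient bound
    have hgrad2 : ∀ x : B, x ∈ A → |d' x - (L (a : B)) x| ≤ Real.sqrt (2 * δ) * ‖x‖ := by
      intro x hx
      have h1 := hgrad x hx
      have h2 : (d' x - (L (a : B)) x) ^ 2 ≤ (Real.sqrt (2 * δ) * ‖x‖) ^ 2 := by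
        rw [mul_pow, Real.sq_sqrt (by linarith : (0:ℝ) ≤ 2 * δ)]
        nlinarith [hLbb x, hδpos.le]
      exact sq_abs_le (mul_nonneg (Real.sqrt_nonneg _) (norm_nonneg _)) h2
    -- bound on (L a) a
    set s := Real.sqrt ((L (a : B)) (a : B)) with hs_def
    have hLaa_nonneg : 0 ≤ (L (a : B)) (a : B) := by
      have := hpos (a : B) a.2
      simp only [qL] at this
      linarith
    have hs_sq : s ^ 2 = (L (a : B)) (a : B) := Real.sq_sqrt hLaa_nonneg
    have hGa : |d' (a : B) - (L (a : B)) (a : B)| ≤ Real.sqrt (2 * δ) * s := by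
      have h1 := hgrad (a : B) a.2
      have h2 : (d' (a : B) - (L (a : B)) (a : B)) ^ 2 ≤ (Real.sqrt (2 * δ) * s) ^ 2 := by
        rw [mul_pow, Real.sq_sqrt (by linarith : (0:ℝ) ≤ 2 * δ), hs_sq]
        nlinarith
      exact sq_abs_le (mul_nonneg (Real.sqrt_nonneg _) (Real.sqrt_nonneg _)) h2
    have hs_bound : s ≤ 2 * Real.sqrt (2 * δ) + Real.sqrt (-2 * m) := by
      apply quad_root (Real.sqrt_nonneg _) (Real.sqrt_nonneg _) (by linarith)
      -- s² ≤ 2 √(2δ) s + (-2m)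
      have hψ : μ ≤ C0 - d' (a : B) + (1 / 2) * (L (a : B)) (a : B) := by
        have := hμle a
        rw [expand] at this
        linarith
      have habs := abs_le.mp hGa
      nlinarith [habs.1, habs.2, hs_sq]
    have h2δ : Real.sqrt (2 * δ) ≤ Real.sqrt 2 := by
      apply Real.sqrt_le_sqrt
      linarith
    have hss₀ : s ≤ s₀ := by
      rw [hs₀_def]
      linarith
    -- Hahn-Banach extension
    set f : A →L[ℝ] ℝ := (d' - L (a : B)).comp (Submodule.subtypeL A) with hf_def
    have hf_bound : ∀ y : A, ‖f y‖ ≤ Real.sqrt (2 * δ) * ‖y‖ := by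
      intro y
      have : f y = d' (y : B) - (L (a : B)) (y : B) := by
        simp [hf_def, ContinuousLinearMap.sub_apply]
      rw [Real.norm_eq_abs, this]
      simpa using hgrad2 (y : B) y.2
    have hf_norm : ‖f‖ ≤ Real.sqrt (2 * δ) :=
      f.opNorm_le_bound (Real.sqrt_nonneg _) hf_bound
    obtain ⟨v, hv_eq, hv_norm⟩ := exists_extension_norm_eq A f
    have hvn : ‖v‖ ≤ Real.sqrt (2 * δ) := by rw [hv_norm]; exact hf_norm
    set u := d' - L (a : B) - v with hu_def
    have hu0 : ∀ x ∈ A, u x = 0 := by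
      intro x hx
      have h1 : v x = f ⟨x, hx⟩ := hv_eq ⟨x, hx⟩
      have h2 : f ⟨x, hx⟩ = d' x - (L (a : B)) x := by
        simp [hf_def, ContinuousLinearMap.sub_apply]
      simp only [hu_def, ContinuousLinearMap.sub_apply]
      rw [h1, h2]
      ring
    have hqu : qL Lt u ≤ 0 := hneg u hu0
    have hdecomp : d' - L (a : B) = u + v := by
      rw [hu_def]
      abel
    -- final expansion
    have hfinal : qL Lt (d' - L (a : B)) = qL Lt u + (Lt u) v + qL Lt v := by
      rw [hdecomp]
      simp only [qL, map_add, ContinuousLinearMap.add_apply]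
      rw [hsymt u v]
      ring
    -- bound (Lt u) v
    have hLtuv : (Lt u) v = (Lt d') v - v (a : B) - (Lt v) v := by
      rw [hu_def]
      simp only [map_sub, ContinuousLinearMap.sub_apply]
      rw [hLtL (a : B) v]
    have hbd1 : (Lt d') v ≤ ‖d'‖ * ‖v‖ :=
      le_trans (le_abs_self _) (dual_apply_le Lt hLt d' v)
    have hbd2 : |v (a : B)| ≤ Real.sqrt (2 * δ) * s₀ := by
      have h1 : v (a : B) = f a := by
        have := hv_eq a
        simpa using this
      have h2 : f a = d' (a : B) - (L (a : B)) (a : B) := by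
        simp [hf_def, ContinuousLinearMap.sub_apply]
      rw [h1, h2]
      calc |d' (a : B) - (L (a : B)) (a : B)| ≤ Real.sqrt (2 * δ) * s := hGa
        _ ≤ Real.sqrt (2 * δ) * s₀ := by gcongr
    have hbd3 : |(Lt v) v| ≤ 2 * δ := by
      have h1 := hq_abs v
      have h2 : ‖v‖ ^ 2 ≤ 2 * δ := by
        have := Real.sq_sqrt (show (0:ℝ) ≤ 2 * δ by linarith)
        nlinarith [norm_nonneg v, Real.sqrt_nonneg (2 * δ)]
      linarith
    have hsqrt_mul : Real.sqrt (2 * δ) = Real.sqrt 2 * Real.sqrt δ := Real.sqrt_mul (by norm_num) δ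
    -- put it together
    have hvals : qL Lt (d' - L (a : B)) ≤ Real.sqrt δ * M := by
      have habs1 := abs_le.mp hbd2
      have habs3 := abs_le.mp hbd3
      have hvv : qL Lt v ≤ δ := by
        simp only [qL]
        linarith [habs3.2]
      have hnormv : ‖v‖ ≤ Real.sqrt 2 * Real.sqrt δ := by rw [← hsqrt_mul]; exact hvn
      have hd'v : (Lt d') v ≤ ‖d'‖ * (Real.sqrt 2 * Real.sqrt δ) := by
        calc (Lt d') v ≤ ‖d'‖ * ‖v‖ := hbd1
          _ ≤ ‖d'‖ * (Real.sqrt 2 * Real.sqrt δ) := by gcongr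
      rw [hfinal, hLtuv]
      have hva : -v (a : B) ≤ Real.sqrt 2 * Real.sqrt δ * s₀ := by
        rw [← hsqrt_mul]
        linarith [habs1.1]
      have hM_expand : Real.sqrt δ * M
          = ‖d'‖ * (Real.sqrt 2 * Real.sqrt δ) + Real.sqrt 2 * Real.sqrt δ * s₀
            + 3 * Real.sqrt δ := by
        rw [hM_def]; ring
      rw [hM_expand]
      have : -(Lt v) v ≤ 2 * δ := by linarith [habs3.1]
      linarith [hqu, hδ_le_sqδ]
    have hμη : μ ≤ η := by
      have h1 : μ ≤ Real.sqrt δ * M := le_trans (hμle a) hvals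
      have h2 : Real.sqrt δ * M ≤ (η / M) * M := by gcongr
      rw [div_mul_cancel₀ η (ne_of_gt hM)] at h2
      linarith
    exact hμη
  linarith
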